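/- Let m ≥ 2 be an integer, let ζ ∈ (0,1] be a constant such that 1/2 ≤ T_{m−1}(z) ≤ 1 and 0 < T'_{m−1}(z) ≤ (m−1)² for all z with 1/(1+ζ) ≤ z ≤ 1, and set E_m = m + 1/8 + 5ζ(m−1)²/3. Let R > 0, let w ∈ C¹((0,∞)) with w(y) > 0 for all y ≥ R, and suppose r, t > 0 satisfy r − t ≥ max{R, (2/ζ)t}. Then for all ξ, η ∈ [0,1], writing λ = r + tη − 2tηξ, K(r,t,η,ξ) = λ^m/(√(r + tη − tηξ)·√(r − ξtη)), and Θ̃(r,t,η,ξ) = (λ² + r² − t²η²)/(2rλ), the partial derivative in t satisfies: ∂/∂t [ K(r,t,η,ξ)·w(λ)·T_{m−1}(Θ̃(r,t,η,ξ)) ] ≥ −{ E_m·w(λ)/λ + |w'(λ)| }·K(r,t,η,ξ). -/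

import Mathlib

set_option maxHeartbeats 1000000


open Set

/-- Evaluation of the Chebyshev polynomial of the first kind. -/
noncomputable def chebT (k : ℤ) (z : ℝ) : ℝ := (Polynomial.Chebyshev.T ℝ k).eval z

/-- Evaluation of the derivative of the Chebyshev polynomial of the first kind. -/
noncomputable def chebT' (k : ℤ) (z : ℝ) : ℝ :=
  (Polynomial.derivative (Polynomial.Chebyshev.T ℝ k)).eval z

/-- `λ = r + tη - 2tηξ`. -/
noncomputable def lamf (r t η ξ : ℝ) : ℝ := r + t * η - 2 * t * η * ξ

/-- The kernel `K(r,t,η,ξ) = λ^m / (√(r+tη-tηξ)·√(r-ξtη))`. -/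
noncomputable def Kf (m : ℕ) (r t η ξ : ℝ) : ℝ :=
  (lamf r t η ξ) ^ m / (Real.sqrt (r + t * η - t * η * ξ) * Real.sqrt (r - ξ * (t * η)))

/-- `Θ̃(r,t,η,ξ) = (λ² + r² - t²η²)/(2rλ)`. -/
noncomputable def Thetaf (r t η ξ : ℝ) : ℝ :=
  ((lamf r t η ξ) ^ 2 + r ^ 2 - t ^ 2 * η ^ 2) / (2 * r * lamf r t η ξ)

/-- the pointwise lower bound on the `t`-derivative of the kernel
`K·w(λ)·T_{m-1}(Θ̃)` in even dimensions. -/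
-- T1 bound
lemma bT1 (mr r t η ξ L U V Tv : ℝ)
    (hmr : 2 ≤ mr) (hr : 0 < r) (ht : 0 < t) (hrt0 : 0 < r - t) (h3t : 3 * t ≤ r)
    (hξ0 : 0 ≤ ξ) (hξ1 : ξ ≤ 1) (hη0 : 0 ≤ η) (hη1 : η ≤ 1)
    (hLpos : 0 < L) (hLhi : L ≤ r + t) (hUlo : r ≤ U) (hVlo : r - t ≤ V)
    (hTv0 : 0 ≤ Tv) (hTv2 : Tv ≤ 1) :
    -(mr / L) ≤ η * (1 - 2 * ξ) * (mr / L - r / (2 * (U * V))) * Tv := by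
  have hUpos : 0 < U := by linarith
  have hVpos : 0 < V := by linarith
  have hUVpos : 0 < U * V := mul_pos hUpos hVpos
  have h1ξ : (0:ℝ) ≤ 1 - ξ := by linarith
  have hc0 : 0 ≤ mr / L - r / (2 * (U * V)) := by
    rw [sub_nonneg, div_le_div_iff₀ (by positivity) hLpos]
    nlinarith [mul_le_mul hUlo hVlo hrt0.le (by positivity : (0:ℝ) ≤ U),
      mul_le_mul_of_nonneg_left hLhi hr.le,
      mul_nonneg (by linarith : (0:ℝ) ≤ mr - 2) hUVpos.le,
      mul_pos hr ht]
  have hccTv : (mr / L - r / (2 * (U * V))) * Tv ≤ mr / L := by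
    have h1 : (mr / L - r / (2 * (U * V))) * Tv ≤ (mr / L - r / (2 * (U * V))) * 1 :=
      mul_le_mul_of_nonneg_left hTv2 hc0
    have h2 : 0 ≤ r / (2 * (U * V)) := by positivity
    linarith
  have h0 : 0 ≤ (1 + η * (1 - 2 * ξ)) * ((mr / L - r / (2 * (U * V))) * Tv) :=
    mul_nonneg (by nlinarith [mul_nonneg hη0 h1ξ]) (mul_nonneg hc0 hTv0)
  nlinarith [hccTv]

-- T3 bound
lemma bT3 (M ζ r t η ξ L Tp : ℝ)
    (hM : 1 ≤ M) (hζ0 : 0 < ζ) (hr : 0 < r) (ht : 0 < t) (h3t : 3 * t ≤ r)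
    (h2t : 2 * t ≤ ζ * (r - t))
    (hξ0 : 0 ≤ ξ) (hξ1 : ξ ≤ 1) (hη0 : 0 ≤ η) (hη1 : η ≤ 1)
    (hLpos : 0 < L) (hLlo : r - t ≤ L) (hLhi : L ≤ r + t)
    (hTp1 : 0 < Tp) (hTp2 : Tp ≤ M) :
    -(5 * ζ * M / 3 / L) ≤ -(2 * t * η ^ 2 * ξ * (1 - ξ) * (L + r) * Tp / (r * L ^ 2)) := by
  have h1ξ : (0:ℝ) ≤ 1 - ξ := by linarith
  apply neg_le_neg
  rw [div_le_div_iff₀ (by positivity) (by positivity)]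
  have e1 : 2 * t ≤ ζ * L := by nlinarith [mul_le_mul_of_nonneg_left hLlo hζ0.le]
  have e2 : η ^ 2 * (ξ * (1 - ξ)) ≤ 1 / 4 := by
    nlinarith [mul_le_mul_of_nonneg_right (by nlinarith : η ^ 2 ≤ 1) (mul_nonneg hξ0 h1ξ),
      sq_nonneg (1 - 2 * ξ)]
  have e3 : (L + r) * Tp ≤ 3 * r * M :=
    mul_le_mul (by linarith) hTp2 hTp1.le (by positivity)
  have e12 : 2 * t * (η ^ 2 * (ξ * (1 - ξ))) ≤ ζ * L * (1 / 4) :=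
    mul_le_mul e1 e2 (mul_nonneg (sq_nonneg η) (mul_nonneg hξ0 h1ξ)) (by positivity)
  have e4 : (2 * t * (η ^ 2 * (ξ * (1 - ξ)))) * ((L + r) * Tp) ≤
      (ζ * L * (1 / 4)) * (3 * r * M) :=
    mul_le_mul e12 e3 (mul_nonneg (by linarith : (0:ℝ) ≤ L + r) hTp1.le) (by positivity)
  nlinarith [mul_le_mul_of_nonneg_right e4 hLpos.le,
    mul_nonneg (mul_nonneg (mul_nonneg hζ0.le hr.le) (by linarith : (0:ℝ) ≤ M)) (sq_nonneg L)]

-- core bound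
lemma core_bound (mr ζ r t η ξ L U V Tv Tp : ℝ)
    (hLdef : L = r + t * η - 2 * t * η * ξ)
    (hUdef : U = r + t * η - t * η * ξ)
    (hVdef : V = r - ξ * (t * η))
    (hmr : 2 ≤ mr) (hζ0 : 0 < ζ) (hζ1 : ζ ≤ 1) (hr : 0 < r) (ht : 0 < t)
    (hξ0 : 0 ≤ ξ) (hξ1 : ξ ≤ 1) (hη0 : 0 ≤ η) (hη1 : η ≤ 1)
    (h2t : 2 * t ≤ ζ * (r - t)) (hrt0 : 0 < r - t)
    (hTv1 : 1 / 2 ≤ Tv) (hTv2 : Tv ≤ 1) (hTp1 : 0 < Tp) (hTp2 : Tp ≤ (mr - 1) ^ 2) :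
    -((mr + 1 / 8 + 5 * ζ * (mr - 1) ^ 2 / 3) / L) ≤
      (mr * (η - 2 * η * ξ) / L - (η - η * ξ) / (2 * U) - (-(ξ * η)) / (2 * V)) * Tv
        + Tp * (-(2 * t * η ^ 2 * ξ * (1 - ξ) * (L + r)) / (r * L ^ 2)) := by
  have h1ξ : (0:ℝ) ≤ 1 - ξ := by linarith
  have h1η : (0:ℝ) ≤ 1 - η := by linarith
  have h3t : 3 * t ≤ r := by nlinarith
  have hLlo : r - t ≤ L := by
    rw [hLdef]; nlinarith [mul_nonneg ht.le h1η, mul_nonneg (mul_nonneg ht.le hη0) h1ξ]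
  have hLhi : L ≤ r + t := by
    rw [hLdef]; nlinarith [mul_nonneg ht.le h1η, mul_nonneg (mul_nonneg ht.le hη0) hξ0]
  have hLpos : 0 < L := by linarith
  have hUlo : r ≤ U := by
    rw [hUdef]; nlinarith [mul_nonneg (mul_nonneg ht.le hη0) h1ξ]
  have hUpos : 0 < U := by linarith
  have hVlo : r - t ≤ V := by
    rw [hVdef]; nlinarith [mul_nonneg (mul_nonneg ht.le hξ0) h1η, mul_nonneg ht.le h1ξ]
  have hVpos : 0 < V := by linarith
  have hM : 1 ≤ (mr - 1) ^ 2 := by nlinarith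
  have hTv0 : (0:ℝ) ≤ Tv := by linarith
  refine le_trans (b := η * (1 - 2 * ξ) * (mr / L - r / (2 * (U * V))) * Tv
      + t * η ^ 2 * ξ * (1 - ξ) * Tv / (U * V)
      + -(2 * t * η ^ 2 * ξ * (1 - ξ) * (L + r) * Tp / (r * L ^ 2))) ?_ (le_of_eq ?_)
  · have hT1 := bT1 mr r t η ξ L U V Tv hmr hr ht hrt0 h3t hξ0 hξ1 hη0 hη1 hLpos hLhi hUlo hVlo hTv0 hTv2
    have hT2 : 0 ≤ t * η ^ 2 * ξ * (1 - ξ) * Tv / (U * V) :=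
      div_nonneg
        (mul_nonneg (mul_nonneg (mul_nonneg (mul_nonneg ht.le (sq_nonneg η)) hξ0) h1ξ) hTv0)
        (mul_pos hUpos hVpos).le
    have hT3 := bT3 ((mr - 1) ^ 2) ζ r t η ξ L Tp hM hζ0 hr ht h3t h2t hξ0 hξ1 hη0 hη1 hLpos hLlo hLhi hTp1 hTp2
    have hsplit : (mr + 1 / 8 + 5 * ζ * (mr - 1) ^ 2 / 3) / L
        = mr / L + (1 / 8) / L + 5 * ζ * (mr - 1) ^ 2 / 3 / L := by ring
    have h8 : (0:ℝ) ≤ (1 / 8) / L := by positivity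
    linarith
  · have hLne : r + t * η - 2 * t * η * ξ ≠ 0 := by rw [← hLdef]; exact hLpos.ne'
    have hUne : r + t * η - t * η * ξ ≠ 0 := by rw [← hUdef]; exact hUpos.ne'
    have hVne : r - ξ * (t * η) ≠ 0 := by rw [← hVdef]; exact hVpos.ne'
    have hLne' : L ≠ 0 := hLpos.ne'
    have hUne' : U ≠ 0 := hUpos.ne'
    have hVne' : V ≠ 0 := hVpos.ne'
    field_simp
    subst hLdef hUdef hVdef
    ring

lemma ident2 (m : ℕ) (r t η ξ s q U V W W' Tv Tp P : ℝ)
    (hs2 : s ^ 2 = U) (hq2 : q ^ 2 = V)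
    (hs : s ≠ 0) (hq : q ≠ 0) (hr : r ≠ 0)
    (hL : r + t * η - 2 * t * η * ξ ≠ 0) :
    P * (r + t * η - 2 * t * η * ξ) / (s * q) *
      ((((m : ℝ) * (η - 2 * η * ξ) / (r + t * η - 2 * t * η * ξ) - (η - η * ξ) / (2 * U)
          - (-(ξ * η)) / (2 * V)) * Tv
        + Tp * (-(2 * t * η ^ 2 * ξ * (1 - ξ) * ((r + t * η - 2 * t * η * ξ) + r))
            / (r * (r + t * η - 2 * t * η * ξ) ^ 2))) * W
        + W' * (η - 2 * η * ξ) * Tv) =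
      (((((m : ℕ) : ℝ) * P * (η - 2 * η * ξ)) * (s * q)
          - P * (r + t * η - 2 * t * η * ξ) * ((1 / (2 * s) * (η - η * ξ)) * q + s * (1 / (2 * q) * (-(ξ * η)))))
          / (s * q) ^ 2 * W
        + P * (r + t * η - 2 * t * η * ξ) / (s * q) * (W' * (η - 2 * η * ξ))) * Tv
      + (P * (r + t * η - 2 * t * η * ξ) / (s * q) * W) *
          (Tp * (((((2 : ℕ) : ℝ) * (r + t * η - 2 * t * η * ξ) ^ (2 - 1) * (η - 2 * η * ξ)
                    - ((2 : ℕ) : ℝ) * t ^ (2 - 1) * η ^ 2) * (2 * r * (r + t * η - 2 * t * η * ξ))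
                  - ((r + t * η - 2 * t * η * ξ) ^ 2 + r ^ 2 - t ^ 2 * η ^ 2) * (2 * r * (η - 2 * η * ξ)))
                / (2 * r * (r + t * η - 2 * t * η * ξ)) ^ 2)) := by
  subst hs2; subst hq2
  generalize hLL : r + t * η - 2 * t * η * ξ = L at hL ⊢
  field_simp
  subst hLL
  ring

lemma bP1 (W' η ξ Tv : ℝ) (hξ0 : 0 ≤ ξ) (hξ1 : ξ ≤ 1) (hη0 : 0 ≤ η) (hη1 : η ≤ 1)
    (hTv0 : 0 ≤ Tv) (hTv2 : Tv ≤ 1) : -|W'| ≤ W' * (η - 2 * η * ξ) * Tv := by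
  have h2 : |η - 2 * η * ξ| ≤ 1 :=
    abs_le.mpr ⟨by nlinarith [mul_nonneg hη0 (by linarith : (0:ℝ) ≤ 1 - ξ)],
      by nlinarith [mul_nonneg hη0 hξ0]⟩
  have h3 : |Tv| ≤ 1 := abs_le.mpr ⟨by linarith, hTv2⟩
  have h1 : |W' * (η - 2 * η * ξ) * Tv| ≤ |W'| := by
    rw [abs_mul, abs_mul]
    have k1 : |W'| * |η - 2 * η * ξ| ≤ |W'| * 1 := mul_le_mul_of_nonneg_left h2 (abs_nonneg W')
    have k2 : |W'| * |η - 2 * η * ξ| * |Tv| ≤ |W'| * |η - 2 * η * ξ| * 1 :=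
      mul_le_mul_of_nonneg_left h3 (mul_nonneg (abs_nonneg _) (abs_nonneg _))
    nlinarith [k1, k2]
  linarith [neg_abs_le (W' * (η - 2 * η * ξ) * Tv)]

lemma aux_ineq (m : ℕ) (hm : 2 ≤ m)
    (ζ Em r t η ξ L U V s q W W' Tv Tp : ℝ)
    (hLdef : L = r + t * η - 2 * t * η * ξ)
    (hUdef : U = r + t * η - t * η * ξ)
    (hVdef : V = r - ξ * (t * η))
    (hs : 0 < s) (hq : 0 < q) (hs2 : s ^ 2 = U) (hq2 : q ^ 2 = V)
    (hζ0 : 0 < ζ) (hζ1 : ζ ≤ 1) (hr : 0 < r) (ht : 0 < t)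
    (hξ0 : 0 ≤ ξ) (hξ1 : ξ ≤ 1) (hη0 : 0 ≤ η) (hη1 : η ≤ 1)
    (h2t : 2 * t ≤ ζ * (r - t)) (hrt0 : 0 < r - t)
    (hW : 0 < W)
    (hTv1 : 1 / 2 ≤ Tv) (hTv2 : Tv ≤ 1) (hTp1 : 0 < Tp) (hTp2 : Tp ≤ ((m : ℝ) - 1) ^ 2)
    (hEm : Em = (m : ℝ) + 1 / 8 + 5 * ζ * ((m : ℝ) - 1) ^ 2 / 3) :
    -((Em * W / L + |W'|) * (L ^ m / (s * q))) ≤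
      (((((m : ℕ) : ℝ) * L ^ (m - 1) * (η - 2 * η * ξ)) * (s * q)
          - L ^ m * ((1 / (2 * s) * (η - η * ξ)) * q + s * (1 / (2 * q) * (-(ξ * η)))))
          / (s * q) ^ 2 * W
        + L ^ m / (s * q) * (W' * (η - 2 * η * ξ))) * Tv
      + (L ^ m / (s * q) * W) *
          (Tp * (((((2 : ℕ) : ℝ) * L ^ (2 - 1) * (η - 2 * η * ξ)
                    - ((2 : ℕ) : ℝ) * t ^ (2 - 1) * η ^ 2) * (2 * r * L)
                  - (L ^ 2 + r ^ 2 - t ^ 2 * η ^ 2) * (2 * r * (η - 2 * η * ξ)))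
                / (2 * r * L) ^ 2)) := by
  have hm2 : (2 : ℝ) ≤ (m : ℝ) := by exact_mod_cast hm
  have hLpos : 0 < L := by
    rw [hLdef]
    nlinarith [mul_nonneg ht.le (by linarith : (0:ℝ) ≤ 1 - η),
      mul_nonneg (mul_nonneg ht.le hη0) (by linarith : (0:ℝ) ≤ 1 - ξ), hrt0]
  have hLm : L ^ m = L ^ (m - 1) * L := by
    conv_lhs => rw [show m = (m - 1) + 1 by omega]
    rw [pow_succ]
  rw [hLm, hEm]
  refine le_trans (b := L ^ (m - 1) * L / (s * q) *
      ((((m : ℝ) * (η - 2 * η * ξ) / L - (η - η * ξ) / (2 * U)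
          - (-(ξ * η)) / (2 * V)) * Tv
        + Tp * (-(2 * t * η ^ 2 * ξ * (1 - ξ) * (L + r)) / (r * L ^ 2))) * W
        + W' * (η - 2 * η * ξ) * Tv)) ?_ (le_of_eq ?_)
  swap
  · have hLne : r + t * η - 2 * t * η * ξ ≠ 0 := by rw [← hLdef]; exact hLpos.ne'
    rw [hLdef]
    exact ident2 m r t η ξ s q U V W W' Tv Tp _ hs2 hq2 hs.ne' hq.ne' hr.ne' hLne
  · have hKpos : 0 < L ^ (m - 1) * L / (s * q) := by positivity
    have hcore := core_bound ((m : ℝ)) ζ r t η ξ L U V Tv Tp hLdef hUdef hVdef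
      hm2 hζ0 hζ1 hr ht hξ0 hξ1 hη0 hη1 h2t hrt0 hTv1 hTv2 hTp1 hTp2
    have hbr2 := mul_le_mul_of_nonneg_right hcore hW.le
    have hpart1 := bP1 W' η ξ Tv hξ0 hξ1 hη0 hη1 (by linarith) hTv2
    have hB : -(((m : ℝ) + 1 / 8 + 5 * ζ * ((m : ℝ) - 1) ^ 2 / 3) * W / L + |W'|) ≤
        (((m : ℝ) * (η - 2 * η * ξ) / L - (η - η * ξ) / (2 * U)
          - (-(ξ * η)) / (2 * V)) * Tv
        + Tp * (-(2 * t * η ^ 2 * ξ * (1 - ξ) * (L + r)) / (r * L ^ 2))) * W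
        + W' * (η - 2 * η * ξ) * Tv := by
      have e1 : -(((m : ℝ) + 1 / 8 + 5 * ζ * ((m : ℝ) - 1) ^ 2 / 3) / L) * W
          = -(((m : ℝ) + 1 / 8 + 5 * ζ * ((m : ℝ) - 1) ^ 2 / 3) * W / L) := by ring
      linarith [hbr2, hpart1]
    have h2 := mul_le_mul_of_nonneg_left hB hKpos.le
    have e : -((((m : ℝ) + 1 / 8 + 5 * ζ * ((m : ℝ) - 1) ^ 2 / 3) * W / L + |W'|)
          * (L ^ (m - 1) * L / (s * q)))
        = (L ^ (m - 1) * L / (s * q)) *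
          (-(((m : ℝ) + 1 / 8 + 5 * ζ * ((m : ℝ) - 1) ^ 2 / 3) * W / L + |W'|)) := by ring
    linarith [h2]
open Set

theorem stmt_16 (m : ℕ) (hm : 2 ≤ m)
    (ζ : ℝ) (hζ0 : 0 < ζ) (hζ1 : ζ ≤ 1)
    (hT : ∀ z : ℝ, 1 / (1 + ζ) ≤ z → z ≤ 1 →
      1 / 2 ≤ chebT ((m : ℤ) - 1) z ∧ chebT ((m : ℤ) - 1) z ≤ 1 ∧
      0 < chebT' ((m : ℤ) - 1) z ∧ chebT' ((m : ℤ) - 1) z ≤ ((m : ℝ) - 1) ^ 2)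
    (Em : ℝ) (hEm : Em = (m : ℝ) + 1 / 8 + 5 * ζ * ((m : ℝ) - 1) ^ 2 / 3)
    (R : ℝ) (hR : 0 < R)
    (w : ℝ → ℝ) (hw : ContDiffOn ℝ 1 w (Ioi (0 : ℝ)))
    (hwpos : ∀ y : ℝ, R ≤ y → 0 < w y)
    (r t : ℝ) (hr : 0 < r) (ht : 0 < t) (hrt : max R ((2 / ζ) * t) ≤ r - t)
    (ξ η : ℝ) (hξ : ξ ∈ Icc (0 : ℝ) 1) (hη : η ∈ Icc (0 : ℝ) 1) :
    -((Em * w (lamf r t η ξ) / lamf r t η ξ + |deriv w (lamf r t η ξ)|) * Kf m r t η ξ)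
      ≤ deriv (fun t' : ℝ =>
          Kf m r t' η ξ * w (lamf r t' η ξ) * chebT ((m : ℤ) - 1) (Thetaf r t' η ξ)) t := by
  obtain ⟨hξ0, hξ1⟩ := hξ
  obtain ⟨hη0, hη1⟩ := hη
  have h1ξ : (0:ℝ) ≤ 1 - ξ := by linarith
  have h1η : (0:ℝ) ≤ 1 - η := by linarith
  have hRrt : R ≤ r - t := le_trans (le_max_left _ _) hrt
  have hrt0 : 0 < r - t := lt_of_lt_of_le hR hRrt
  have h2t : 2 * t ≤ ζ * (r - t) := by
    have h := le_trans (le_max_right _ _) hrt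
    rw [div_mul_eq_mul_div, div_le_iff₀ hζ0] at h
    nlinarith
  have h3t : 3 * t ≤ r := by nlinarith
  have hLlo : r - t ≤ r + t * η - 2 * t * η * ξ := by
    nlinarith [mul_nonneg ht.le h1η, mul_nonneg (mul_nonneg ht.le hη0) h1ξ]
  have hLpos : (0:ℝ) < r + t * η - 2 * t * η * ξ := by linarith
  have hLhi : r + t * η - 2 * t * η * ξ ≤ r + t := by
    nlinarith [mul_nonneg ht.le h1η, mul_nonneg (mul_nonneg ht.le hη0) hξ0]
  have hUpos : (0:ℝ) < r + t * η - t * η * ξ := by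
    nlinarith [mul_nonneg (mul_nonneg ht.le hη0) h1ξ]
  have hVpos : (0:ℝ) < r - ξ * (t * η) := by
    nlinarith [mul_nonneg (mul_nonneg ht.le hξ0) h1η, mul_nonneg ht.le h1ξ]
  -- derivatives of the basic linear functions
  have hL : HasDerivAt (fun t' : ℝ => r + t' * η - 2 * t' * η * ξ) (η - 2 * η * ξ) t := by
    have h : HasDerivAt (fun t' : ℝ => r + t' * η - 2 * t' * η * ξ)
        (0 + 1 * η - 2 * 1 * η * ξ) t :=
      ((hasDerivAt_const t r).add ((hasDerivAt_id t).mul_const η)).sub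
        ((((hasDerivAt_id t).const_mul 2).mul_const η).mul_const ξ)
    have e : (0 + 1 * η - 2 * 1 * η * ξ) = η - 2 * η * ξ := by ring
    exact e ▸ h
  have hU : HasDerivAt (fun t' : ℝ => r + t' * η - t' * η * ξ) (η - η * ξ) t := by
    have h : HasDerivAt (fun t' : ℝ => r + t' * η - t' * η * ξ)
        (0 + 1 * η - 1 * η * ξ) t :=
      ((hasDerivAt_const t r).add ((hasDerivAt_id t).mul_const η)).sub
        (((hasDerivAt_id t).mul_const η).mul_const ξ)
    have e : (0 + 1 * η - 1 * η * ξ) = η - η * ξ := by ring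
    exact e ▸ h
  have hV : HasDerivAt (fun t' : ℝ => r - ξ * (t' * η)) (-(ξ * η)) t := by
    have h : HasDerivAt (fun t' : ℝ => r - ξ * (t' * η)) (0 - ξ * (1 * η)) t :=
      (hasDerivAt_const t r).sub (((hasDerivAt_id t).mul_const η).const_mul ξ)
    have e : (0 - ξ * (1 * η)) = -(ξ * η) := by ring
    exact e ▸ h
  have hsU := (Real.hasDerivAt_sqrt hUpos.ne').comp t hU
  have hsV := (Real.hasDerivAt_sqrt hVpos.ne').comp t hV
  have hden := hsU.mul hsV
  have hdenne : Real.sqrt (r + t * η - t * η * ξ) * Real.sqrt (r - ξ * (t * η)) ≠ 0 :=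
    (mul_pos (Real.sqrt_pos.mpr hUpos) (Real.sqrt_pos.mpr hVpos)).ne'
  have hK := (hL.pow m).div hden hdenne
  have hmem : (r + t * η - 2 * t * η * ξ) ∈ Ioi (0:ℝ) := hLpos
  have hdw : HasDerivAt w (deriv w (r + t * η - 2 * t * η * ξ)) (r + t * η - 2 * t * η * ξ) :=
    ((hw.contDiffAt (isOpen_Ioi.mem_nhds hmem)).differentiableAt one_ne_zero).hasDerivAt
  have hwL := hdw.comp t hL
  have hN : HasDerivAt
      (fun t' : ℝ => (r + t' * η - 2 * t' * η * ξ) ^ 2 + r ^ 2 - t' ^ 2 * η ^ 2) _ t :=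
    ((hL.pow 2).add_const (r ^ 2)).sub ((hasDerivAt_pow 2 t).mul_const (η ^ 2))
  have hD : HasDerivAt (fun t' : ℝ => 2 * r * (r + t' * η - 2 * t' * η * ξ))
      (2 * r * (η - 2 * η * ξ)) t := hL.const_mul (2 * r)
  have hDne : 2 * r * (r + t * η - 2 * t * η * ξ) ≠ 0 := by positivity
  have hTh := hN.div hD hDne
  have hP := (Polynomial.Chebyshev.T ℝ ((m : ℤ) - 1)).hasDerivAt
      (((r + t * η - 2 * t * η * ξ) ^ 2 + r ^ 2 - t ^ 2 * η ^ 2)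
        / (2 * r * (r + t * η - 2 * t * η * ξ)))
  have hcheb := HasDerivAt.comp t hP hTh
  have hF := (hK.mul hwL).mul hcheb
  -- bounds for Θ
  have hΘhi : (((r + t * η - 2 * t * η * ξ) ^ 2 + r ^ 2 - t ^ 2 * η ^ 2)
      / (2 * r * (r + t * η - 2 * t * η * ξ))) ≤ 1 := by
    rw [div_le_one (by positivity)]
    nlinarith [mul_nonneg (mul_nonneg (sq_nonneg (t * η)) hξ0) h1ξ]
  have hΘlo : 1 / (1 + ζ) ≤ (((r + t * η - 2 * t * η * ξ) ^ 2 + r ^ 2 - t ^ 2 * η ^ 2)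
      / (2 * r * (r + t * η - 2 * t * η * ξ))) := by
    rw [div_le_div_iff₀ (by linarith) (by positivity)]
    have hc4 : (t * η) ^ 2 * (ξ * (1 - ξ)) ≤ t ^ 2 * (1 / 4) := by
      have k1 : (t * η) ^ 2 ≤ t ^ 2 := by nlinarith [mul_nonneg (sq_nonneg t) (mul_nonneg h1η (by linarith : (0:ℝ) ≤ 1 + η))]
      have k2 : ξ * (1 - ξ) ≤ 1 / 4 := by nlinarith [sq_nonneg (1 - 2 * ξ)]
      exact mul_le_mul k1 k2 (mul_nonneg hξ0 h1ξ) (sq_nonneg t)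
    have ht2 : t ^ 2 ≤ ζ * (r * (r + t * η - 2 * t * η * ξ)) := by
      have k1 : t * t ≤ (ζ * (r - t) / 2) * (r / 3) :=
        mul_le_mul (by linarith) (by linarith) ht.le (by positivity)
      nlinarith [mul_le_mul_of_nonneg_left hLlo (mul_pos hζ0 hr).le]
    nlinarith [hc4, ht2, mul_pos hr hLpos, hζ0.le, mul_nonneg (mul_nonneg hζ0.le hr.le) hLpos.le,
      mul_le_mul_of_nonneg_left hc4 (by linarith : (0:ℝ) ≤ 1 + ζ)]
  obtain ⟨hTv1, hTv2, hTp1, hTp2⟩ := hT _ hΘlo hΘhi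
  refine le_trans ?_ (le_of_eq hF.deriv.symm)
  exact aux_ineq m hm ζ Em r t η ξ _ _ _ _ _ _ _ _ _ rfl rfl rfl
    (Real.sqrt_pos.mpr hUpos) (Real.sqrt_pos.mpr hVpos)
    (Real.sq_sqrt hUpos.le) (Real.sq_sqrt hVpos.le)
    hζ0 hζ1 hr ht hξ0 hξ1 hη0 hη1 h2t hrt0
    (hwpos _ (by unfold lamf; linarith)) hTv1 hTv2 hTp1 hTp2 hEm
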